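/- Let p ∈ ℕ* and let x ∈ ℝ^{q}. Define the random vector Q(x) componentwise by Q(x)_j = ‖x‖_p · sign(x_j) · U_j where U_j are independent Bernoulli random variables with success probability |x_j|/‖x‖_p. Then E[Q(x)] = x and E[‖Q(x) − x‖²] = ‖x‖₁ ‖x‖_p − ‖x‖². -/

import Mathlib

open MeasureTheory

theorem quantization_mean_and_variance (q p : ℕ) (hp : 0 < p)
    (Ω : Type*) [MeasurableSpace Ω] (μ : Measure Ω) [IsProbabilityMeasure μ]
    (x : EuclideanSpace ℝ (Fin q)) (hx : x ≠ 0)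
    (np : ℝ) (hnp : np = (∑ j, |x j| ^ (p : ℝ)) ^ ((p : ℝ)⁻¹))
    (U : Fin q → Ω → ℝ)
    (hUint : ∀ j, Integrable (U j) μ)
    (hU01 : ∀ j a, U j a = 0 ∨ U j a = 1)
    (hUmean : ∀ j, ∫ a, U j a ∂μ = |x j| / np)
    (Q : Ω → EuclideanSpace ℝ (Fin q))
    (hQ : ∀ a j, Q a j = np * Real.sign (x j) * U j a) :
    (∀ j, ∫ a, Q a j ∂μ = x j) ∧
    (∫ a, ‖Q a - x‖ ^ 2 ∂μ = (∑ j, |x j|) * np - ‖x‖ ^ 2) := by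
  obtain ⟨j0, hj0⟩ : ∃ j, x j ≠ 0 := by
    by_contra h
    push_neg at h
    exact hx (PiLp.ext fun i => by simp [h i])
  have hnp_pos : 0 < np := by
    rw [hnp]
    apply Real.rpow_pos_of_pos
    exact Finset.sum_pos' (fun i _ => Real.rpow_nonneg (abs_nonneg _) _)
      ⟨j0, Finset.mem_univ _, Real.rpow_pos_of_pos (abs_pos.mpr hj0) _⟩
  have hmean : ∀ j, ∫ a, Q a j ∂μ = x j := by
    intro j
    simp only [hQ]
    rw [integral_const_mul, hUmean]
    have : np * Real.sign (x j) * (|x j| / np) = Real.sign (x j) * |x j| := by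
      field_simp [hnp_pos.ne']
    rw [this]
    rcases lt_trichotomy (x j) 0 with h | h | h
    · rw [Real.sign_of_neg h, abs_of_neg h]; ring
    · simp [h]
    · rw [Real.sign_of_pos h, abs_of_pos h]; ring
  refine ⟨hmean, ?_⟩
  have key : ∀ j, (∫ a, (Q a j - x j) ^ 2 ∂μ) = np * |x j| - (x j) ^ 2 ∧
      Integrable (fun a => (Q a j - x j) ^ 2) μ := by
    intro j
    set s := Real.sign (x j) with hs
    have hrw : ∀ a, (Q a j - x j) ^ 2 =
        (np ^ 2 * s ^ 2 - 2 * np * s * (x j)) * U j a + (x j) ^ 2 := by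
      intro a
      rw [hQ]
      rcases hU01 j a with h | h <;> rw [h] <;> ring
    have hint : Integrable (fun a => (Q a j - x j) ^ 2) μ := by
      rw [show (fun a => (Q a j - x j) ^ 2) =
        fun a => (np ^ 2 * s ^ 2 - 2 * np * s * (x j)) * U j a + (x j) ^ 2 from funext hrw]
      exact ((hUint j).const_mul _).add (integrable_const _)
    refine ⟨?_, hint⟩
    simp only [hrw]
    rw [integral_add ((hUint j).const_mul _) (integrable_const _),
      integral_const_mul, hUmean, integral_const]
    simp only [measure_univ, probReal_univ, ENNReal.toReal_one, one_smul, smul_eq_mul]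
    rcases lt_trichotomy (x j) 0 with h | h | h
    · rw [hs, Real.sign_of_neg h, abs_of_neg h]
      field_simp [hnp_pos.ne']
      ring
    · simp [hs, h, Real.sign_zero]
    · rw [hs, Real.sign_of_pos h, abs_of_pos h]
      field_simp [hnp_pos.ne']
      ring
  have hfun : ∀ a : Ω, ‖Q a - x‖ ^ 2 = ∑ j, (Q a j - x j) ^ 2 := by
    intro a
    rw [EuclideanSpace.norm_eq, Real.sq_sqrt (Finset.sum_nonneg fun i _ => sq_nonneg _)]
    refine Finset.sum_congr rfl fun i _ => ?_
    rw [Real.norm_eq_abs, sq_abs]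
    rfl
  have hnx : ‖x‖ ^ 2 = ∑ j, (x j) ^ 2 := by
    rw [EuclideanSpace.norm_eq, Real.sq_sqrt (Finset.sum_nonneg fun i _ => sq_nonneg _)]
    exact Finset.sum_congr rfl fun i _ => by rw [Real.norm_eq_abs, sq_abs]
  calc ∫ a, ‖Q a - x‖ ^ 2 ∂μ = ∫ a, ∑ j, (Q a j - x j) ^ 2 ∂μ := by
        simp only [hfun]
    _ = ∑ j, ∫ a, (Q a j - x j) ^ 2 ∂μ := integral_finset_sum _ fun j _ => (key j).2
    _ = ∑ j, (np * |x j| - (x j) ^ 2) := Finset.sum_congr rfl fun j _ => (key j).1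
    _ = (∑ j, |x j|) * np - ‖x‖ ^ 2 := by
        rw [Finset.sum_sub_distrib, hnx, ← Finset.mul_sum, mul_comm]
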